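/- Let T : ℝᵏ → ℝᵏ be a Borel bimeasurable bijection preserving Lebesgue measure. Then Lebesgue-almost every point of ℝᵏ is either recurrent or has empty ω-limit set (its forward orbit leaves every compact set). -/

import Mathlib

open MeasureTheory

open Filter Set ENNReal in
/-- Core Hopf/Poincaré argument: a measurable set whose points never return to it,
but whose orbits visit a fixed finite-measure set infinitely often, is null. -/
lemma hopf_null_aux {E : Type*} [MeasurableSpace E] {μ : Measure E} (T : E ≃ᵐ E)
    (hT : MeasurePreserving T μ μ) (A K : Set E) (hA : MeasurableSet A)
    (hK : MeasurableSet K) (hKfin : μ K ≠ ⊤)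
    (hret : ∀ y ∈ A, ∀ n : ℕ, (⇑T)^[n + 1] y ∉ A)
    (hio : ∀ y ∈ A, ∀ m : ℕ, ∃ n, m ≤ n ∧ (⇑T)^[n + 1] y ∈ K) :
    μ A = 0 := by
  have hTm : ∀ n : ℕ, Measurable ((⇑T)^[n]) := fun n => T.measurable.iterate n
  have hTsm : ∀ n : ℕ, Measurable ((⇑T.symm)^[n]) := fun n => T.symm.measurable.iterate n
  set g : E → ℝ≥0∞ := fun y => ∑' n : ℕ, K.indicator 1 ((⇑T)^[n + 1] y) with hg
  -- g is infinite on A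
  have hginf : ∀ y ∈ A, g y = ⊤ := by
    intro y hy
    have hinf : {n : ℕ | (⇑T)^[n + 1] y ∈ K}.Infinite := by
      apply Set.infinite_of_forall_exists_gt
      intro a
      obtain ⟨n, hn, hnK⟩ := hio y hy (a + 1)
      exact ⟨n, hnK, lt_of_lt_of_le (Nat.lt_succ_self a) hn⟩
    have : g y = ∑' n : ℕ, {m : ℕ | (⇑T)^[m + 1] y ∈ K}.indicator 1 n := by
      refine tsum_congr fun n => ?_
      by_cases h : (⇑T)^[n + 1] y ∈ K
      · rw [Set.indicator_of_mem h, Set.indicator_of_mem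
          (show n ∈ {m : ℕ | (⇑T)^[m + 1] y ∈ K} from h)]
        rfl
      · rw [Set.indicator_of_notMem h, Set.indicator_of_notMem
          (show n ∉ {m : ℕ | (⇑T)^[m + 1] y ∈ K} from h)]
    rw [this, ← tsum_subtype]
    haveI := hinf.to_subtype
    exact ENNReal.tsum_const_eq_top_of_ne_zero one_ne_zero
  -- integral of g over A is bounded by μ K
  have hgmeas : Measurable g :=
    Measurable.ennreal_tsum fun n => (measurable_const.indicator hK).comp (hTm (n + 1))
  set S : ℕ → Set E := fun n => ((⇑T.symm)^[n + 1] ⁻¹' A) ∩ K with hS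
  have hSmeas : ∀ n, MeasurableSet (S n) := fun n => (hA.preimage (hTsm (n + 1))).inter hK
  have hSleft : ∀ n : ℕ, ∀ x, (⇑T.symm)^[n] ((⇑T)^[n] x) = x := fun n =>
    Function.LeftInverse.iterate T.symm_apply_apply n
  have hSright : ∀ n : ℕ, ∀ x, (⇑T)^[n] ((⇑T.symm)^[n] x) = x := fun n =>
    Function.LeftInverse.iterate T.apply_symm_apply n
  have hkey : ∀ n : ℕ, (⇑T)^[n + 1] ⁻¹' (S n) = A ∩ ((⇑T)^[n + 1] ⁻¹' K) := by
    intro n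
    ext x
    simp only [hS, Set.mem_preimage, Set.mem_inter_iff, hSleft (n + 1) x]
  have hmeq : ∀ n : ℕ, μ (A ∩ ((⇑T)^[n + 1] ⁻¹' K)) = μ (S n) := by
    intro n
    rw [← hkey n]
    exact (hT.iterate (n + 1)).measure_preimage (hSmeas n).nullMeasurableSet
  have hdisj : Pairwise (Function.onFun Disjoint S) := by
    have main : ∀ i j : ℕ, i < j → Disjoint (S i) (S j) := by
      intro i j hij
      rw [Set.disjoint_left]
      rintro x ⟨hxi, -⟩ ⟨hxj, -⟩
      have hji : j + 1 = (j - i) + (i + 1) := by omega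
      have hb : (⇑T.symm)^[j + 1] x = (⇑T.symm)^[j - i] ((⇑T.symm)^[i + 1] x) := by
        rw [hji, Function.iterate_add_apply]
      obtain ⟨d, hd⟩ : ∃ d : ℕ, j - i = d + 1 := ⟨j - i - 1, by omega⟩
      apply hret _ hxj d
      have : (⇑T)^[d + 1] ((⇑T.symm)^[j + 1] x) = (⇑T.symm)^[i + 1] x := by
        rw [hb, ← hd, hSright]
      rw [this]; exact hxi
    intro i j hij
    rcases lt_or_gt_of_ne hij with h | h
    · exact main i j h
    · exact (main j i h).symm
  have hsum : ∑' n : ℕ, μ (S n) ≤ μ K := by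
    rw [← measure_iUnion hdisj hSmeas]
    exact measure_mono (Set.iUnion_subset fun n => Set.inter_subset_right)
  have hint : ∫⁻ y in A, g y ∂μ ≤ μ K := by
    have h1 : ∫⁻ y in A, g y ∂μ = ∑' n : ℕ, ∫⁻ y in A, K.indicator 1 ((⇑T)^[n + 1] y) ∂μ := by
      rw [hg]
      exact lintegral_tsum fun n =>
        ((measurable_const.indicator hK).comp (hTm (n + 1))).aemeasurable
    have h2 : ∀ n : ℕ, ∫⁻ y in A, K.indicator 1 ((⇑T)^[n + 1] y) ∂μ
        = μ (A ∩ ((⇑T)^[n + 1] ⁻¹' K)) := by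
      intro n
      have : ∀ y, K.indicator (1 : E → ℝ≥0∞) ((⇑T)^[n + 1] y)
          = ((⇑T)^[n + 1] ⁻¹' K).indicator 1 y := by
        intro y
        by_cases h : (⇑T)^[n + 1] y ∈ K
        · rw [Set.indicator_of_mem h, Set.indicator_of_mem
            (show y ∈ (⇑T)^[n + 1] ⁻¹' K from h)]
          rfl
        · rw [Set.indicator_of_notMem h, Set.indicator_of_notMem
            (show y ∉ (⇑T)^[n + 1] ⁻¹' K from h)]
      simp_rw [this]
      rw [lintegral_indicator (hK.preimage (hTm (n + 1)))]
      simp only [Pi.one_apply]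
      rw [setLIntegral_one,
        Measure.restrict_apply (hK.preimage (hTm (n + 1))), Set.inter_comm]
    rw [h1]
    calc ∑' n : ℕ, ∫⁻ y in A, K.indicator 1 ((⇑T)^[n + 1] y) ∂μ
        = ∑' n : ℕ, μ (S n) := by
          refine tsum_congr fun n => ?_; rw [h2 n, hmeq n]
      _ ≤ μ K := hsum
  -- conclude
  have heq : ∫⁻ y in A, g y ∂μ = ⊤ * μ A := by
    rw [setLIntegral_congr_fun hA hginf]
    exact setLIntegral_const A ⊤
  by_contra hne
  rw [heq, ENNReal.top_mul hne] at hint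
  exact hKfin (top_le_iff.mp hint)

/-- Hopf's theorem: a bimeasurable bijection of ℝᵏ preserving Lebesgue measure has the
property that almost every point is either recurrent or has empty ω-limit set. -/
theorem hopf_recurrence (k : ℕ) (T : (Fin k → ℝ) ≃ᵐ (Fin k → ℝ))
    (hinv : ∀ A : Set (Fin k → ℝ), MeasurableSet A → volume (⇑T ⁻¹' A) = volume A) :
    ∀ᵐ x ∂(volume : Measure (Fin k → ℝ)),
      (∃ φ : ℕ → ℕ, StrictMono φ ∧
        Filter.Tendsto (fun j => (⇑T)^[φ j] x) Filter.atTop (nhds x)) ∨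
      ¬ ∃ y : Fin k → ℝ, ∃ φ : ℕ → ℕ, StrictMono φ ∧
        Filter.Tendsto (fun j => (⇑T)^[φ j] x) Filter.atTop (nhds y) := by
  classical
  set E := Fin k → ℝ
  have hT : MeasurePreserving (⇑T) (volume : Measure E) volume := by
    refine ⟨T.measurable, Measure.ext fun s hs => ?_⟩
    rw [Measure.map_apply T.measurable hs]
    exact hinv s hs
  -- the bad sets
  set A : (Fin k → ℚ) → ℚ → ℕ → Set E := fun c r N =>
    Metric.ball (fun i => (c i : ℝ)) r
      ∩ (⋂ n : ℕ, (⇑T)^[n + 1] ⁻¹' (Metric.ball (fun i => (c i : ℝ)) (r : ℝ))ᶜ)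
      ∩ (⋂ m : ℕ, ⋃ n : ℕ, ⋃ _ : m ≤ n, (⇑T)^[n + 1] ⁻¹' Metric.closedBall 0 N) with hA
  have hAmeas : ∀ c r N, MeasurableSet (A c r N) := by
    intro c r N
    refine ((measurableSet_ball.inter ?_).inter ?_)
    · exact MeasurableSet.iInter fun n =>
        measurableSet_ball.compl.preimage (T.measurable.iterate (n + 1))
    · exact MeasurableSet.iInter fun m => MeasurableSet.iUnion fun n =>
        MeasurableSet.iUnion fun _ =>
          measurableSet_closedBall.preimage (T.measurable.iterate (n + 1))
  have hAnull : ∀ c r N, volume (A c r N) = 0 := by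
    intro c r N
    refine hopf_null_aux T hT _ (Metric.closedBall 0 N) (hAmeas c r N)
      measurableSet_closedBall
      ((isCompact_closedBall 0 (N : ℝ)).measure_lt_top).ne ?_ ?_
    · intro y hy n hcon
      obtain ⟨⟨-, hy2⟩, -⟩ := hy
      obtain ⟨⟨hc1, -⟩, -⟩ := hcon
      exact (Set.mem_iInter.mp hy2 n) hc1
    · intro y hy m
      obtain ⟨-, hy3⟩ := hy
      have := Set.mem_iInter.mp hy3 m
      simp only [Set.mem_iUnion, Set.mem_preimage] at this
      obtain ⟨n, hn, hnK⟩ := this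
      exact ⟨n, hn, hnK⟩
  -- the union of all bad sets is null
  set Bad : Set E := ⋃ p : (Fin k → ℚ) × ℚ × ℕ × ℕ,
    (⇑T)^[p.2.2.2] ⁻¹' (A p.1 p.2.1 p.2.2.1) with hBad
  have hBadNull : volume Bad = 0 := by
    refine measure_iUnion_null fun p => ?_
    exact (hT.iterate p.2.2.2).quasiMeasurePreserving.preimage_null
      (hAnull p.1 p.2.1 p.2.2.1)
  rw [MeasureTheory.ae_iff]
  refine measure_mono_null ?_ hBadNull
  -- every point violating the conclusion lies in a bad set
  intro x hx
  simp only [Set.mem_setOf_eq, not_or, not_not] at hx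
  obtain ⟨hnrec, y, φ, hφmono, hφlim⟩ := hx
  -- Step 1: the orbit visits a fixed closed ball infinitely often
  set N : ℕ := ⌈‖y‖⌉₊ + 1 with hN
  have hNy : ‖y‖ < (N : ℝ) := by
    have h3 : (‖y‖ : ℝ) ≤ ⌈‖y‖⌉₊ := Nat.le_ceil _
    rw [hN]; push_cast; linarith
  have hyball : Metric.closedBall (0 : E) N ∈ nhds y := by
    apply Filter.mem_of_superset (Metric.ball_mem_nhds y (by linarith : (0:ℝ) < N - ‖y‖))
    intro z hz
    rw [Metric.mem_ball] at hz
    rw [Metric.mem_closedBall]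
    have h1 : dist z 0 ≤ dist z y + dist y 0 := dist_triangle z y 0
    have h2 : dist y 0 = ‖y‖ := by simp
    linarith
  have hvis : ∀ m : ℕ, ∃ n, m ≤ n ∧ (⇑T)^[n] x ∈ Metric.closedBall (0 : E) N := by
    intro m
    obtain ⟨J, hJ⟩ := (Filter.tendsto_atTop'.mp hφlim) _ hyball
    refine ⟨φ (max J m), le_trans (le_max_right J m) (hφmono.le_apply), ?_⟩
    exact hJ (max J m) (le_max_left J m)
  -- Step 2: non-recurrence gives a uniform escape radius after some time
  have hesc : ∃ ε : ℝ, 0 < ε ∧ ∃ m0 : ℕ, 1 ≤ m0 ∧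
      ∀ n, m0 ≤ n → (⇑T)^[n] x ∉ Metric.ball x ε := by
    by_contra hcon
    push_neg at hcon
    apply hnrec
    have hfreq : ∀ j : ℕ, ∃ᶠ n in Filter.atTop, dist ((⇑T)^[n] x) x < 1 / (j + 1) := by
      intro j
      rw [Filter.frequently_atTop]
      intro a
      obtain ⟨n, hn, hball⟩ := hcon (1 / (j + 1)) (by positivity) (a + 1) (by omega)
      exact ⟨n, by omega, Metric.mem_ball.mp hball⟩
    obtain ⟨ψ, hψmono, hψ⟩ := Filter.extraction_forall_of_frequently hfreq
    refine ⟨ψ, hψmono, Metric.tendsto_atTop.mpr fun ε hε => ?_⟩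
    obtain ⟨j0, hj0⟩ := exists_nat_one_div_lt hε
    refine ⟨j0, fun j hj => lt_of_lt_of_le (lt_of_lt_of_le (hψ j) ?_) hj0.le⟩
    apply one_div_le_one_div_of_le (by positivity)
    exact_mod_cast Nat.succ_le_succ hj
  obtain ⟨ε, hε, m0, hm0, hm0esc⟩ := hesc
  -- Step 3: a small rational ball around x
  obtain ⟨r, hr1, hr2⟩ := exists_rat_btwn (by linarith : ε / 4 < ε / 2)
  have hrpos : (0 : ℝ) < r := by linarith
  have hcex : ∃ c : Fin k → ℚ, dist (fun i => (c i : ℝ)) x < r := by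
    have : ∀ i : Fin k, ∃ q : ℚ, |x i - q| < r := fun i => exists_rat_near (x i) hrpos
    choose c hc using this
    refine ⟨c, (dist_pi_lt_iff hrpos).mpr fun i => ?_⟩
    rw [Real.dist_eq, abs_sub_comm]
    exact hc i
  obtain ⟨c, hcx⟩ := hcex
  set B : Set E := Metric.ball (fun i => (c i : ℝ)) r with hB
  have hxB : x ∈ B := by rwa [hB, Metric.mem_ball, dist_comm]
  have hBsub : B ⊆ Metric.ball x ε := by
    intro z hz
    rw [Metric.mem_ball] at hz ⊢
    calc dist z x ≤ dist z (fun i => (c i : ℝ)) + dist (fun i => (c i : ℝ)) x :=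
          dist_triangle _ _ _
      _ < r + r := add_lt_add hz hcx
      _ < ε := by linarith
  -- Step 4: last return time to B
  set S : Finset ℕ := (Finset.range m0).filter (fun n => (⇑T)^[n] x ∈ B) with hSdef
  have hS0 : (0 : ℕ) ∈ S := by
    rw [hSdef, Finset.mem_filter, Finset.mem_range]
    exact ⟨hm0, by simpa using hxB⟩
  set ℓ : ℕ := S.max' ⟨0, hS0⟩ with hℓ
  have hℓmem : ℓ ∈ S := S.max'_mem ⟨0, hS0⟩
  have hℓB : (⇑T)^[ℓ] x ∈ B := (Finset.mem_filter.mp hℓmem).2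
  have hnoret : ∀ n : ℕ, (⇑T)^[n + 1 + ℓ] x ∉ B := by
    intro n hcon
    by_cases h : n + 1 + ℓ < m0
    · have hmem : n + 1 + ℓ ∈ S := by
        rw [hSdef, Finset.mem_filter, Finset.mem_range]; exact ⟨h, hcon⟩
      have := S.le_max' _ hmem
      omega
    · exact hm0esc (n + 1 + ℓ) (by omega) (hBsub hcon)
  -- Step 5: x lies in the bad set indexed by (c, r, N, ℓ)
  rw [hBad]
  refine Set.mem_iUnion.mpr ⟨⟨c, r, N, ℓ⟩, ?_⟩
  rw [Set.mem_preimage, hA]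
  refine ⟨⟨hℓB, Set.mem_iInter.mpr fun n => ?_⟩, Set.mem_iInter.mpr fun m => ?_⟩
  · rw [Set.mem_preimage, ← Function.iterate_add_apply]
    exact hnoret n
  · simp only [Set.mem_iUnion, Set.mem_preimage]
    obtain ⟨n', hn', hn'K⟩ := hvis (m + ℓ + 1)
    refine ⟨n' - ℓ - 1, by omega, ?_⟩
    rw [← Function.iterate_add_apply]
    have : n' - ℓ - 1 + 1 + ℓ = n' := by omega
    rwa [this]
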